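/- Suppose D is bounded self-adjoint with m ≤ D_s, D_t ≤ M for all s,t ∈ ℝ, where 0 < m < M, and set δ = m/(M−m). Then for all α ∈ [−δ, 1+δ] and all s,t ∈ ℝ: (1−α) D_s^{-1} + α D_t^{-1} ≥ (2/M)·((M−m)/(M+m))·(δ + 1/2 − |α − 1/2|) as operators. -/

import Mathlib

open NormedSpace RealInnerProductSpace

/-- `D_t = e^{tL} D e^{tL*}`. -/
noncomputable def Dt {H : Type*} [NormedAddCommGroup H] [InnerProductSpace ℝ H]
    [CompleteSpace H] (L D : H →L[ℝ] H) (t : ℝ) : H →L[ℝ] H :=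
  exp (t • L) * D * ContinuousLinearMap.adjoint (exp (t • L))

lemma stmt7_key2 (m M α n p q : ℝ) (hm : 0 < m) (hmM : m < M) (hn : 0 ≤ n)
    (hp1 : n / M ≤ p) (hp2 : p ≤ n / m) (hq1 : n / M ≤ q)
    (hα1 : 1/2 ≤ α) (hα2 : α ≤ 1 + m / (M - m)) :
    2 * (m + (1 - α) * (M - m)) * n / (M * (M + m)) ≤ (1 - α) * p + α * q := by
  have hM : 0 < M := hm.trans hmM
  have hMm : 0 < M - m := by linarith
  have hMpm : 0 < M + m := by linarith
  rw [div_le_iff₀ (by positivity : (0:ℝ) < M * (M + m))]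
  have hp1' : n ≤ p * M := (div_le_iff₀ hM).mp hp1
  have hp2' : p * m ≤ n := (le_div_iff₀ hm).mp hp2
  have hq1' : n ≤ q * M := (div_le_iff₀ hM).mp hq1
  have hα2' : (α - 1) * (M - m) ≤ m := by
    have := (le_div_iff₀ hMm).mp (by linarith : α - 1 ≤ m / (M - m))
    linarith
  rcases le_total α 1 with h1 | h1
  · nlinarith [mul_nonneg (by linarith : (0:ℝ) ≤ 1 - α) (by linarith : 0 ≤ p * M - n),
      mul_nonneg (by linarith : (0:ℝ) ≤ α) (by linarith : 0 ≤ q * M - n),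
      mul_nonneg (mul_nonneg hn (by linarith : (0:ℝ) ≤ α - 1/2)) hMm.le]
  · nlinarith [mul_nonneg (by linarith : (0:ℝ) ≤ α - 1) (by linarith : 0 ≤ n - p * m),
      mul_nonneg (by linarith : (0:ℝ) ≤ α) (by linarith : 0 ≤ q * M - n),
      mul_nonneg (mul_nonneg hn (by linarith : (0:ℝ) ≤ m - (α - 1) * (M - m))) hMm.le,
      mul_nonneg hn (by linarith : (0:ℝ) ≤ m - (α - 1) * (M - m))]

lemma stmt7_key (m M α n p q : ℝ) (hm : 0 < m) (hmM : m < M) (hn : 0 ≤ n)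
    (hp1 : n / M ≤ p) (hp2 : p ≤ n / m) (hq1 : n / M ≤ q) (hq2 : q ≤ n / m)
    (hα1 : -(m / (M - m)) ≤ α) (hα2 : α ≤ 1 + m / (M - m)) :
    2 / M * ((M - m) / (M + m)) * (m / (M - m) + 1 / 2 - |α - 1 / 2|) * n ≤
      (1 - α) * p + α * q := by
  have hM : 0 < M := hm.trans hmM
  have hMm : 0 < M - m := by linarith
  have hMpm : 0 < M + m := by linarith
  rcases le_total (1/2) α with h | h
  · have := stmt7_key2 m M α n p q hm hmM hn hp1 hp2 hq1 h hα2
    rw [abs_of_nonneg (by linarith)]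
    have heq : 2 / M * ((M - m) / (M + m)) * (m / (M - m) + 1 / 2 - (α - 1/2)) * n
        = 2 * (m + (1 - α) * (M - m)) * n / (M * (M + m)) := by
      field_simp; ring
    linarith [heq ▸ this]
  · have := stmt7_key2 m M (1 - α) n q p hm hmM hn hq1 hq2 hp1 (by linarith) (by linarith)
    rw [abs_of_nonpos (by linarith)]
    have heq : 2 / M * ((M - m) / (M + m)) * (m / (M - m) + 1 / 2 - -(α - 1/2)) * n
        = 2 * (m + (1 - (1 - α)) * (M - m)) * n / (M * (M + m)) := by
      field_simp; ring
    rw [heq]; linarith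

lemma stmt7_inv_bounds {H : Type*} [NormedAddCommGroup H] [InnerProductSpace ℝ H]
    [CompleteSpace H]
    (A B : H →L[ℝ] H) (hA : IsSelfAdjoint A) (m M : ℝ) (hm : 0 < m) (hM : 0 < M)
    (hb : ∀ x : H, m * ‖x‖ ^ 2 ≤ ⟪x, A x⟫ ∧ ⟪x, A x⟫ ≤ M * ‖x‖ ^ 2)
    (hAB : A * B = 1) (x : H) :
    ‖x‖ ^ 2 / M ≤ ⟪x, B x⟫ ∧ ⟪x, B x⟫ ≤ ‖x‖ ^ 2 / m := by
  set y := B x with hy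
  have hAy : A y = x := by
    have := congrFun (congrArg DFunLike.coe hAB) x
    simpa [ContinuousLinearMap.mul_apply] using this
  have hsym : ∀ u v : H, ⟪A u, v⟫ = ⟪u, A v⟫ := fun u v => hA.isSymmetric u v
  have hxy : ⟪x, B x⟫ = ⟪y, A y⟫ := by
    rw [← hy, ← hAy]; rw [real_inner_comm]
  constructor
  · set z := y - (1/M) • x with hz
    have h0 : 0 ≤ ⟪z, A z⟫ := le_trans (by positivity) (hb z).1
    have h1 : ⟪y, A x⟫ = ‖x‖ ^ 2 := by
      rw [← hsym y x, hAy, real_inner_self_eq_norm_sq]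
    have h2 : ⟪x, A y⟫ = ‖x‖ ^ 2 := by rw [hAy, real_inner_self_eq_norm_sq]
    have hexp : ⟪z, A z⟫ = ⟪y, A y⟫ - 2 * (1/M) * ‖x‖ ^ 2 + (1/M)^2 * ⟪x, A x⟫ := by
      simp only [hz, map_sub, map_smul, inner_sub_left, inner_sub_right,
        real_inner_smul_left, real_inner_smul_right, h1, h2, one_div]
      ring
    have hAx := (hb x).2
    have h5 : 2 * (1/M) * ‖x‖ ^ 2 - (1/M)^2 * ⟪x, A x⟫ ≤ ⟪y, A y⟫ := by linarith
    have h6 : (1/M)^2 * ⟪x, A x⟫ ≤ (1/M)^2 * (M * ‖x‖ ^ 2) :=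
      mul_le_mul_of_nonneg_left hAx (by positivity)
    have h7 : (1/M)^2 * (M * ‖x‖ ^ 2) = ‖x‖ ^ 2 / M := by
      field_simp
    have h8 : 2 * (1/M) * ‖x‖ ^ 2 = 2 * (‖x‖ ^ 2 / M) := by ring
    rw [hxy]; linarith
  · have h1 : m * ‖y‖ ^ 2 ≤ ⟪y, A y⟫ := (hb y).1
    have h2 : ⟪y, A y⟫ = ⟪y, x⟫ := by rw [hAy]
    have h3 : ⟪y, x⟫ ≤ ‖y‖ * ‖x‖ := real_inner_le_norm y x
    have h4 : m * ‖y‖ ≤ ‖x‖ := by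
      rcases eq_or_lt_of_le (norm_nonneg y) with h | h
      · rw [← h]; simpa using norm_nonneg x
      · nlinarith
    have hcomm : ⟪x, B x⟫ = ⟪y, x⟫ := by rw [← hy, real_inner_comm]
    rw [hcomm, le_div_iff₀ hm]
    nlinarith [norm_nonneg x, norm_nonneg y]

lemma stmt7_Dt_selfAdjoint {H : Type*} [NormedAddCommGroup H] [InnerProductSpace ℝ H]
    [CompleteSpace H] (L D : H →L[ℝ] H) (hD : IsSelfAdjoint D) (t : ℝ) :
    IsSelfAdjoint (Dt L D t) := by
  have := hD.conjugate (exp (t • L))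
  simpa [Dt, ContinuousLinearMap.star_eq_adjoint] using this

/-- If `m ≤ D_t ≤ M` for all `t` (with `0 < m < M`) and
`δ = m/(M−m)`, then for all `α ∈ [−δ, 1+δ]` and all `s, t`:
`(1−α) D_s⁻¹ + α D_t⁻¹ ≥ (2/M)·((M−m)/(M+m))·(δ + 1/2 − |α − 1/2|)`
in the sense of quadratic forms.  `Dinv t` denotes the two-sided bounded
inverse of `D_t`. -/
theorem stmt7 {H : Type*} [NormedAddCommGroup H] [InnerProductSpace ℝ H] [CompleteSpace H]
    (L D : H →L[ℝ] H) (hD : IsSelfAdjoint D) (m M : ℝ) (hm : 0 < m) (hmM : m < M)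
    (hbound : ∀ (t : ℝ) (x : H),
      m * ‖x‖ ^ 2 ≤ ⟪x, Dt L D t x⟫ ∧ ⟪x, Dt L D t x⟫ ≤ M * ‖x‖ ^ 2)
    (Dinv : ℝ → H →L[ℝ] H)
    (hDinv : ∀ t, Dt L D t * Dinv t = 1 ∧ Dinv t * Dt L D t = 1) :
    ∀ α ∈ Set.Icc (-(m / (M - m))) (1 + m / (M - m)), ∀ (s t : ℝ) (x : H),
      2 / M * ((M - m) / (M + m)) * (m / (M - m) + 1 / 2 - |α - 1 / 2|) * ‖x‖ ^ 2 ≤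
        ⟪x, ((1 - α) • Dinv s + α • Dinv t) x⟫ := by
  intro α hα s t x
  have hM : 0 < M := hm.trans hmM
  have hp := stmt7_inv_bounds (Dt L D s) (Dinv s) (stmt7_Dt_selfAdjoint L D hD s)
    m M hm hM (hbound s) (hDinv s).1 x
  have hq := stmt7_inv_bounds (Dt L D t) (Dinv t) (stmt7_Dt_selfAdjoint L D hD t)
    m M hm hM (hbound t) (hDinv t).1 x
  have hexp : ⟪x, ((1 - α) • Dinv s + α • Dinv t) x⟫
      = (1 - α) * ⟪x, Dinv s x⟫ + α * ⟪x, Dinv t x⟫ := by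
    simp [ContinuousLinearMap.add_apply, ContinuousLinearMap.smul_apply,
      inner_add_right, real_inner_smul_right]
  rw [hexp]
  exact stmt7_key m M α (‖x‖ ^ 2) _ _ hm hmM (by positivity)
    hp.1 hp.2 hq.1 hq.2 hα.1 hα.2
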